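/- Assume r ≥ 2 and p = (r - 1)/r (so q = 1/r). Then for every integer v ≥ k + 1, v·Δ(v) = ((r - 1)·(1 - p^(k-1)) - ((v - 1)/r + k·p)·p^k)·P(k·r + v - 1 - k) + (r - 1)·∑_{j=1}^{k-1} (1 - p^j)·Δ(v - 1 - j). -/

import Mathlib

lemma aux_sum (t p : ℝ) (ht : t ≠ 0) (hp : p = (t - 1) / t) (w : ℝ) (A : ℕ → ℝ) :
    ∀ k : ℕ, 1 ≤ k →
      (1 / t) * (∑ j ∈ Finset.Icc 1 k, ((w + 1) + (j : ℝ) * (t - 1)) * p ^ (j - 1) * A j)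
        - (p / t) * (∑ j ∈ Finset.Icc 1 k, (w + (j : ℝ) * (t - 1)) * p ^ (j - 1) * A (j + 1))
      = ((w + t) / t) * A 1
        + (t - 1) * ∑ j ∈ Finset.Icc 1 (k - 1), (1 - p ^ j) * (A (j + 1) - A (j + 2))
        + ((t - 1) * (1 - p ^ (k - 1)) - (w / t + (k : ℝ) * p) * p ^ k) * A (k + 1) := by
  subst hp
  intro k hk
  induction k, hk using Nat.le_induction with
  | base =>
      simp only [Finset.Icc_self, Finset.sum_singleton, Nat.sub_self, Finset.Icc_eq_empty_of_lt (α := ℕ) (show (0:ℕ) < 1 by norm_num),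
        Finset.sum_empty, pow_zero, Nat.cast_one]
      field_simp
      ring
  | succ n hn ih =>
      have hsplit : ∀ f : ℕ → ℝ, ∑ j ∈ Finset.Icc 1 n, f j
          = ∑ j ∈ Finset.Icc 1 (n - 1), f j + f n := by
        intro f
        conv_lhs => rw [← Nat.sub_add_cancel hn]
        rw [Finset.sum_Icc_succ_top (Nat.le_add_left 1 (n - 1)), Nat.sub_add_cancel hn]
      rw [Finset.sum_Icc_succ_top (by omega : 1 ≤ n + 1),
          Finset.sum_Icc_succ_top (by omega : 1 ≤ n + 1),
          show n + 1 - 1 = n from rfl,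
          hsplit (fun j => (1 - ((t-1)/t) ^ j) * (A (j + 1) - A (j + 2)))]
      have hpow : ((t-1)/t) ^ (n - 1) * ((t-1)/t) = ((t-1)/t) ^ n := by
        rw [← pow_succ, Nat.sub_add_cancel hn]
      push_cast
      generalize (∑ k ∈ Finset.Icc 1 n, (w + 1 + (k : ℝ) * (t - 1)) * ((t - 1) / t) ^ (k - 1) * A k) = S1 at ih ⊢
      generalize (∑ k ∈ Finset.Icc 1 n, (w + (k : ℝ) * (t - 1)) * ((t - 1) / t) ^ (k - 1) * A (k + 1)) = S2 at ih ⊢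
      generalize (∑ j ∈ Finset.Icc 1 (n - 1), (1 - ((t - 1) / t) ^ j) * (A (j + 1) - A (j + 2))) = S3 at ih ⊢
      rw [pow_succ]
      generalize ((t - 1) / t) ^ (n - 1) = a at ih hpow ⊢
      generalize ((t - 1) / t) ^ n = b at ih hpow ⊢
      linear_combination (norm := (field_simp; ring1)) ih - t * A (n + 1) * hpow

/-- Equation (2.3): for `r ≥ 2` and `p = (r-1)/r` (so `q = 1/r`), for every
integer `v ≥ k + 1`,
`v·Δ(v) = ((r-1)·(1-p^(k-1)) - ((v-1)/r + k·p)·p^k)·P(k·r+v-1-k)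
  + (r-1)·∑_{j=1}^{k-1} (1-p^j)·Δ(v-1-j)`. -/
theorem delta_recurrence_boundary_case
    (k r : ℕ) (hk : 1 ≤ k) (hr : 2 ≤ r)
    (p q : ℝ) (hp : p = ((r : ℝ) - 1) / r) (hq : q = 1 - p)
    (P : ℕ → ℝ)
    (hP0 : ∀ n, n < k * r → P n = 0)
    (hPkr : P (k * r) = p ^ (k * r))
    (hrec : ∀ n, k * r < n →
      ((n : ℝ) - k * r) * P n =
        q * ∑ j ∈ Finset.Icc 1 k,
          ((n : ℝ) - k * r + j * (r - 1)) * p ^ (j - 1) * P (n - j))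
    (Δ : ℕ → ℝ)
    (hΔ : ∀ v : ℕ, 1 ≤ v → Δ v = P (k * r + v) - P (k * r + v - 1)) :
    ∀ v : ℕ, k + 1 ≤ v →
      (v : ℝ) * Δ v =
        (((r : ℝ) - 1) * (1 - p ^ (k - 1)) - (((v : ℝ) - 1) / r + k * p) * p ^ k) *
            P (k * r + v - 1 - k) +
          ((r : ℝ) - 1) * ∑ j ∈ Finset.Icc 1 (k - 1), (1 - p ^ j) * Δ (v - 1 - j) := by
  subst hp
  subst hq
  intro v hv
  have hr0 : (r : ℝ) ≠ 0 := Nat.cast_ne_zero.mpr (by omega)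
  -- recurrence at n = k*r + v
  have h1 := hrec (k * r + v) (Nat.lt_add_of_pos_right (by omega))
  have hcast1 : ((k * r + v : ℕ) : ℝ) - (k : ℝ) * (r : ℝ) = (v : ℝ) := by push_cast; ring
  rw [hcast1] at h1
  -- recurrence at n = k*r + v - 1
  have he2 : k * r + v - 1 = k * r + (v - 1) := by rw [Nat.add_sub_assoc (by omega)]
  have h2 := hrec (k * r + v - 1)
    (by rw [he2]; exact Nat.lt_add_of_pos_right (by omega))
  have hcast2 : ((k * r + v - 1 : ℕ) : ℝ) - (k : ℝ) * (r : ℝ) = (v : ℝ) - 1 := by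
    rw [he2]; push_cast [Nat.cast_sub (show 1 ≤ v by omega)]; ring
  rw [hcast2,
    show (∑ j ∈ Finset.Icc 1 k,
        ((v : ℝ) - 1 + (j : ℝ) * ((r : ℝ) - 1)) * (((r : ℝ) - 1) / r) ^ (j - 1)
          * P (k * r + v - 1 - j))
      = ∑ j ∈ Finset.Icc 1 k,
        ((v : ℝ) - 1 + (j : ℝ) * ((r : ℝ) - 1)) * (((r : ℝ) - 1) / r) ^ (j - 1)
          * P (k * r + v - (j + 1)) from
      Finset.sum_congr rfl fun j hj => by rw [Nat.sub_sub, Nat.add_comm 1 j]] at h2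
  -- the key algebraic identity
  have haux := aux_sum (r : ℝ) (((r : ℝ) - 1) / r) hr0 rfl ((v : ℝ) - 1)
    (fun j => P (k * r + v - j)) k hk
  simp only [show (v : ℝ) - 1 + 1 = (v : ℝ) from by ring] at haux
  -- rewrite the goal
  rw [hΔ v (by omega), Nat.sub_sub (k * r + v) 1 k, Nat.add_comm 1 k,
    show (∑ j ∈ Finset.Icc 1 (k - 1), (1 - (((r : ℝ) - 1) / r) ^ j) * Δ (v - 1 - j))
      = ∑ j ∈ Finset.Icc 1 (k - 1), (1 - (((r : ℝ) - 1) / r) ^ j) *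
          (P (k * r + v - (j + 1)) - P (k * r + v - (j + 2))) from
      Finset.sum_congr rfl fun j hj => by
        have hj' := Finset.mem_Icc.mp hj
        rw [hΔ (v - 1 - j) (by omega),
          show k * r + (v - 1 - j) = k * r + v - (j + 1) from by
            rw [show v - 1 - j = v - (j + 1) from by omega,
              Nat.add_sub_assoc (by omega)],
          Nat.sub_sub (k * r + v) (j + 1) 1]]
  linear_combination (norm := (field_simp; ring1))
    h1 - (((r : ℝ) - 1) / r) * h2 + haux
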